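/- Let P be a program over Σ, let χ ∈ {κ, HT}, let Π = P^χ ∪ P_g, and let M be an answer set of Π. Then AS(Π ∪ Π_M) ≠ ∅ if and only if M is not a paracoherent answer set of P. -/

import Mathlib

namespace ASP

/-- A rule: head, positive body, negative body (finite sets of atoms). -/
structure Rule (α : Type) where
  head : Finset α
  pos : Finset α
  neg : Finset α
deriving DecidableEq

/-- The extended propositional signature: original atoms of `Σ = σ`, the fresh
believed atoms `K a`, the fresh atoms `λ_{r,a}` (one for each rule `r` over `σ`
and each atom `a`, used for head atoms of `r`), and the fresh atoms `gap (K a)`. -/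
inductive Atom (σ : Type) where
  | base : σ → Atom σ
  | K : σ → Atom σ
  | lam : Rule σ → σ → Atom σ
  | gap : σ → Atom σ
deriving DecidableEq

/-- An interpretation `I` satisfies rule `r`. -/
def Rule.sat {α : Type} (I : Set α) (r : Rule α) : Prop :=
  ((↑r.pos ⊆ I) ∧ ∀ b ∈ r.neg, b ∉ I) → ∃ a ∈ r.head, a ∈ I

/-- `I` is a model of the program `P`. -/
def isModel {α : Type} (I : Set α) (P : Finset (Rule α)) : Prop :=
  ∀ r ∈ P, r.sat I

/-- `I` is a minimal model of `P`. -/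
def isMinModel {α : Type} (I : Set α) (P : Finset (Rule α)) : Prop :=
  isModel I P ∧ ∀ J : Set α, J ⊂ I → ¬ isModel J P

open Classical in
/-- The Gelfond-Lifschitz reduct `P^I`. -/
noncomputable def reduct {α : Type} (P : Finset (Rule α)) (I : Set α) :
    Finset (Rule α) :=
  (P.filter (fun r => ∀ b ∈ r.neg, b ∉ I)).image (fun r => ⟨r.head, r.pos, ∅⟩)

/-- The answer sets of `P`. -/
def AS {α : Type} (P : Finset (Rule α)) : Set (Set α) :=
  {I | isMinModel I (reduct P I)}

/-- The atoms occurring in a rule. -/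
def ruleAtoms {α : Type} [DecidableEq α] (r : Rule α) : Finset α :=
  r.head ∪ r.pos ∪ r.neg

/-- `At(P)`: the atoms occurring in a program. -/
def progAtoms {α : Type} [DecidableEq α] (P : Finset (Rule α)) : Finset α :=
  P.biUnion ruleAtoms

/-- Map a rule along an atom translation. -/
def mapRule {σ α : Type} [DecidableEq α] (f : σ → α) (r : Rule σ) : Rule α :=
  ⟨r.head.image f, r.pos.image f, r.neg.image f⟩

variable {σ : Type} [DecidableEq σ]

/-- The rules of `P^κ` produced for a single rule of `P`. -/
def kappaRule (r : Rule σ) : Finset (Rule (Atom σ)) :=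
  if r.neg = ∅ then {mapRule Atom.base r}
  else
    {⟨r.head.image (Atom.lam r) ∪ r.neg.image Atom.K, r.pos.image Atom.base, ∅⟩}
    ∪ r.head.image (fun a => ⟨{Atom.base a}, {Atom.lam r a}, ∅⟩)
    ∪ (r.head ×ˢ r.neg).image
        (fun p => ⟨∅, {Atom.lam r p.1, Atom.base p.2}, ∅⟩)
    ∪ (r.head ×ˢ r.head).image
        (fun p => ⟨{Atom.lam r p.1}, {Atom.base p.1, Atom.lam r p.2}, ∅⟩)

/-- The epistemic κ-transformation `P^κ`. -/
def kappa (P : Finset (Rule σ)) : Finset (Rule (Atom σ)) :=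
  P.biUnion kappaRule

/-- The epistemic HT-transformation `P^HT`. -/
def ht (P : Finset (Rule σ)) : Finset (Rule (Atom σ)) :=
  kappa P
  ∪ (progAtoms P).image (fun a => ⟨{Atom.K a}, {Atom.base a}, ∅⟩)
  ∪ P.image (fun r => ⟨(r.head ∪ r.neg).image Atom.K, r.pos.image Atom.K, ∅⟩)

/-- The choice `χ ∈ {κ, HT}` of epistemic transformation. -/
inductive Chi | kappa | ht

/-- `P^χ` for `χ ∈ {κ, HT}`. -/
def epi (χ : Chi) (P : Finset (Rule σ)) : Finset (Rule (Atom σ)) :=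
  match χ with
  | Chi.kappa => kappa P
  | Chi.ht => ht P

/-- The gap program `P_g`: for each atom `a` occurring in `P`,
the rule `gap(Ka) ← Ka, not a`. -/
def Pg (P : Finset (Rule σ)) : Finset (Rule (Atom σ)) :=
  (progAtoms P).image (fun a => ⟨{Atom.gap a}, {Atom.K a}, {Atom.base a}⟩)

/-- `Π = P^χ ∪ P_g`. -/
def Pi' (χ : Chi) (P : Finset (Rule σ)) : Finset (Rule (Atom σ)) :=
  epi χ P ∪ Pg P

/-- The signature `Σ^κ = Σ ∪ {Ka : a ∈ Σ}` as a set of extended atoms. -/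
def SigmaK (σ : Type) : Set (Atom σ) :=
  Set.range Atom.base ∪ Set.range Atom.K

/-- The gap `𝒢(I) = {Ka : Ka ∈ I and a ∉ I}` of an interpretation. -/
def gapG (I : Set (Atom σ)) : Set (Atom σ) :=
  {x | ∃ a : σ, x = Atom.K a ∧ Atom.K a ∈ I ∧ Atom.base a ∉ I}

/-- Maximal canonical interpretations in `ℱ`. -/
def mc (F : Set (Set (Atom σ))) : Set (Set (Atom σ)) :=
  {I | I ∈ F ∧ ¬ ∃ J ∈ F, gapG J ⊂ gapG I}

/-- The semi-stable models of `P`. -/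
def SST (P : Finset (Rule σ)) : Set (Set (Atom σ)) :=
  {I | ∃ S ∈ mc (AS (kappa P)), I = S ∩ SigmaK σ}

/-- The semi-equilibrium models of `P`. -/
def SEQ (P : Finset (Rule σ)) : Set (Set (Atom σ)) :=
  {I | ∃ S ∈ mc (AS (ht P)), I = S ∩ SigmaK σ}

/-- The paracoherent semantics selected by `χ`. -/
def PSem (χ : Chi) (P : Finset (Rule σ)) : Set (Set (Atom σ)) :=
  match χ with
  | Chi.kappa => SST P
  | Chi.ht => SEQ P

/-- `M` is a paracoherent answer set of `P` (w.r.t. `χ`): `M` is an answer set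
of `Π = P^χ ∪ P_g` and `M ∩ Σ^κ ∈ SST(P)` (resp. `SEQ(P)`). -/
def paracoherent (χ : Chi) (P : Finset (Rule σ)) (M : Set (Atom σ)) : Prop :=
  M ∈ AS (Pi' χ P) ∧ M ∩ SigmaK σ ∈ PSem χ P

/-- `gap(I) = {gap(Ka) : a occurs in P and gap(Ka) ∈ I}`. -/
def gapSet (P : Finset (Rule σ)) (I : Set (Atom σ)) : Set (Atom σ) :=
  {x | ∃ a ∈ progAtoms P, x = Atom.gap a ∧ Atom.gap a ∈ I}

open Classical in
/-- `gap(I)` as a finite set (used for counting violated weak constraints). -/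
noncomputable def gapFin (P : Finset (Rule σ)) (I : Set (Atom σ)) :
    Finset (Atom σ) :=
  ((progAtoms P).image Atom.gap).filter (· ∈ I)

open Classical in
/-- The constraints `Π_M`: the constraint whose positive body is `gap(M)`,
plus, for each gap atom occurring in `Π` but not in `M`, the constraint
forbidding it. -/
noncomputable def PiM (P : Finset (Rule σ)) (M : Set (Atom σ)) :
    Finset (Rule (Atom σ)) :=
  {⟨∅, gapFin P M, ∅⟩}
  ∪ ((progAtoms P).filter (fun a => Atom.gap a ∉ M)).image
      (fun a => ⟨(∅ : Finset (Atom σ)), {Atom.gap a}, ∅⟩)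

/-- `M` is an optimum answer set of `Π ∪ W`, where `W` is the set of weak
constraints `↝ gap(Ka)` for `a ∈ At(P)`: an answer set of `Π` minimizing the
number `|gap(M)|` of violated weak constraints. -/
def optimum (χ : Chi) (P : Finset (Rule σ)) (M : Set (Atom σ)) : Prop :=
  M ∈ AS (Pi' χ P) ∧
    ∀ M' ∈ AS (Pi' χ P), (gapFin P M).card ≤ (gapFin P M').card

-- ============ AUX ============
set_option linter.unusedSectionVars false

section Aux
variable {α : Type} [DecidableEq α]

lemma mem_ruleAtoms {r : Rule α} {x : α} :
    x ∈ ruleAtoms r ↔ x ∈ r.head ∨ x ∈ r.pos ∨ x ∈ r.neg := by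
  simp [ruleAtoms, Finset.mem_union, or_assoc]

lemma mem_progAtoms_of {P : Finset (Rule α)} {r : Rule α} {x : α}
    (hr : r ∈ P) (hx : x ∈ ruleAtoms r) : x ∈ progAtoms P :=
  Finset.mem_biUnion.2 ⟨r, hr, hx⟩

lemma sat_congr {r : Rule α} {I J : Set α}
    (h : ∀ x ∈ ruleAtoms r, (x ∈ I ↔ x ∈ J)) : r.sat I ↔ r.sat J := by
  unfold Rule.sat
  have hh : ∀ x ∈ r.head, (x ∈ I ↔ x ∈ J) := fun x hx =>
    h x (mem_ruleAtoms.2 (Or.inl hx))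
  have hp : ∀ x ∈ r.pos, (x ∈ I ↔ x ∈ J) := fun x hx =>
    h x (mem_ruleAtoms.2 (Or.inr (Or.inl hx)))
  have hn : ∀ x ∈ r.neg, (x ∈ I ↔ x ∈ J) := fun x hx =>
    h x (mem_ruleAtoms.2 (Or.inr (Or.inr hx)))
  constructor
  · intro hs hc
    obtain ⟨a, ha, haJ⟩ := hs ⟨fun x hx => (hp x hx).2 (hc.1 hx),
      fun b hb hbI => hc.2 b hb ((hn b hb).1 hbI)⟩
    exact ⟨a, ha, (hh a ha).1 haJ⟩
  · intro hs hc
    obtain ⟨a, ha, haJ⟩ := hs ⟨fun x hx => (hp x hx).1 (hc.1 hx),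
      fun b hb hbI => hc.2 b hb ((hn b hb).2 hbI)⟩
    exact ⟨a, ha, (hh a ha).2 haJ⟩

lemma mem_reduct {P : Finset (Rule α)} {I : Set α} {r' : Rule α} :
    r' ∈ reduct P I ↔ ∃ r ∈ P, (∀ b ∈ r.neg, b ∉ I) ∧ r' = ⟨r.head, r.pos, ∅⟩ := by
  classical
  simp only [reduct, Finset.mem_image, Finset.mem_filter]
  constructor
  · rintro ⟨r, ⟨hr, hn⟩, rfl⟩; exact ⟨r, hr, hn, rfl⟩
  · rintro ⟨r, hr, hn, rfl⟩; exact ⟨r, ⟨hr, hn⟩, rfl⟩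

lemma reduct_union {P Q : Finset (Rule α)} {I : Set α} :
    reduct (P ∪ Q) I = reduct P I ∪ reduct Q I := by
  classical
  ext r
  simp only [Finset.mem_union, mem_reduct, Finset.mem_union]
  constructor
  · rintro ⟨r₀, hr₀ | hr₀, hn, rfl⟩
    · exact Or.inl ⟨r₀, hr₀, hn, rfl⟩
    · exact Or.inr ⟨r₀, hr₀, hn, rfl⟩
  · rintro (⟨r₀, hr₀, hn, rfl⟩ | ⟨r₀, hr₀, hn, rfl⟩)
    · exact ⟨r₀, Or.inl hr₀, hn, rfl⟩
    · exact ⟨r₀, Or.inr hr₀, hn, rfl⟩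

lemma isModel_union {P Q : Finset (Rule α)} {I : Set α} :
    isModel I (P ∪ Q) ↔ isModel I P ∧ isModel I Q := by
  simp [isModel, Finset.mem_union, or_imp, forall_and]

lemma reduct_negfree {Q : Finset (Rule α)} {I : Set α}
    (h : ∀ r ∈ Q, r.neg = ∅) : reduct Q I = Q := by
  ext r
  rw [mem_reduct]
  constructor
  · rintro ⟨r₀, hr₀, -, rfl⟩
    have h0 := h r₀ hr₀
    rw [show (⟨r₀.head, r₀.pos, ∅⟩ : Rule α) = r₀ by rw [← h0]]
    exact hr₀
  · intro hr
    exact ⟨r, hr, by simp [h r hr], by rw [← h r hr]⟩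

lemma isModel_reduct_self {Q : Finset (Rule α)} {I : Set α} :
    isModel I (reduct Q I) ↔ ∀ r ∈ Q, r.sat I := by
  constructor
  · intro h r hr
    rintro ⟨hp, hn⟩
    have hmem : (⟨r.head, r.pos, ∅⟩ : Rule α) ∈ reduct Q I :=
      mem_reduct.2 ⟨r, hr, hn, rfl⟩
    exact h ⟨r.head, r.pos, ∅⟩ hmem ⟨hp, by simp⟩
  · intro h r' hr'
    obtain ⟨r, hr, hn, rfl⟩ := mem_reduct.1 hr'
    rintro ⟨hp, -⟩
    exact h r hr ⟨hp, hn⟩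

lemma sat_constraint_iff {c : Rule α} (hc : c.head = ∅) {I : Set α} :
    c.sat I ↔ ¬ ((↑c.pos ⊆ I) ∧ ∀ b ∈ c.neg, b ∉ I) := by
  simp [Rule.sat, hc]

lemma isModel_reduct_constraints {C : Finset (Rule α)} {I J : Set α}
    (hC : ∀ c ∈ C, c.head = ∅) (hJI : J ⊆ I) (hsat : ∀ c ∈ C, c.sat I) :
    isModel J (reduct C I) := by
  intro r' hr'
  obtain ⟨c, hc, hn, rfl⟩ := mem_reduct.1 hr'
  rintro ⟨hp, -⟩
  exact absurd ⟨fun x hx => hJI (hp hx), hn⟩ ((sat_constraint_iff (hC c hc)).1 (hsat c hc))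

lemma AS_union_constraints {Q C : Finset (Rule α)} (hC : ∀ c ∈ C, c.head = ∅)
    {I : Set α} : I ∈ AS (Q ∪ C) ↔ I ∈ AS Q ∧ ∀ c ∈ C, c.sat I := by
  constructor
  · rintro ⟨hmod, hmin⟩
    rw [reduct_union, isModel_union] at hmod
    have hcs : ∀ c ∈ C, c.sat I := isModel_reduct_self.1 hmod.2
    refine ⟨⟨hmod.1, ?_⟩, hcs⟩
    intro J hJ hJm
    exact hmin J hJ (by
      rw [reduct_union, isModel_union]
      exact ⟨hJm, isModel_reduct_constraints hC hJ.subset hcs⟩)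
  · rintro ⟨⟨hmod, hmin⟩, hcs⟩
    constructor
    · rw [reduct_union, isModel_union]
      exact ⟨hmod, isModel_reduct_constraints hC (le_refl I) hcs⟩
    · intro J hJ hJm
      rw [reduct_union, isModel_union] at hJm
      exact hmin J hJ hJm.1

lemma AS_subset_progAtoms {Q : Finset (Rule α)} {I : Set α} (h : I ∈ AS Q) :
    I ⊆ ↑(progAtoms Q) := by
  obtain ⟨hmod, hmin⟩ := h
  by_contra hc
  refine hmin (I ∩ ↑(progAtoms Q)) ⟨Set.inter_subset_left, fun hsub => hc fun x hx => (hsub hx).2⟩ ?_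
  intro r' hr'
  obtain ⟨r, hrQ, hneg, rfl⟩ := mem_reduct.1 hr'
  refine (sat_congr ?_).1 (hmod _ hr')
  intro x hx
  have hx' : x ∈ ruleAtoms r := by
    rw [mem_ruleAtoms] at hx ⊢
    simp only [Finset.notMem_empty] at hx
    tauto
  exact ⟨fun hxI => ⟨hxI, mem_progAtoms_of hrQ hx'⟩, fun h => h.1⟩

end Aux

section SigmaAux
variable {σ : Type} [DecidableEq σ] {P : Finset (Rule σ)} {χ : Chi}

lemma mem_kappa {r : Rule (Atom σ)} :
    r ∈ kappa P ↔ ∃ r₀ ∈ P, r ∈ kappaRule r₀ := Finset.mem_biUnion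

lemma progAtoms_mono {α : Type} [DecidableEq α] {Q Q' : Finset (Rule α)}
    (h : Q ⊆ Q') : progAtoms Q ⊆ progAtoms Q' := by
  intro x hx
  obtain ⟨r, hr, hxr⟩ := Finset.mem_biUnion.1 hx
  exact mem_progAtoms_of (h hr) hxr

lemma kappaRule_cases {r₀ : Rule σ} {r : Rule (Atom σ)} (h : r ∈ kappaRule r₀) :
    (r₀.neg = ∅ ∧ r = mapRule Atom.base r₀) ∨
    (r = ⟨r₀.head.image (Atom.lam r₀) ∪ r₀.neg.image Atom.K, r₀.pos.image Atom.base, ∅⟩) ∨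
    (∃ a ∈ r₀.head, r = ⟨{Atom.base a}, {Atom.lam r₀ a}, ∅⟩) ∨
    (∃ a ∈ r₀.head, ∃ b ∈ r₀.neg, r = ⟨∅, {Atom.lam r₀ a, Atom.base b}, ∅⟩) ∨
    (∃ a ∈ r₀.head, ∃ b ∈ r₀.head, r = ⟨{Atom.lam r₀ a}, {Atom.base a, Atom.lam r₀ b}, ∅⟩) := by
  by_cases hn : r₀.neg = ∅
  · simp only [kappaRule, hn, if_true, Finset.mem_singleton] at h
    exact Or.inl ⟨hn, h⟩
  · simp only [kappaRule, hn, if_false, Finset.mem_union, Finset.mem_image,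
      Finset.mem_singleton, Finset.mem_product] at h
    rcases h with ((rfl | ⟨a, ha, rfl⟩) | ⟨⟨a, b⟩, ⟨ha, hb⟩, rfl⟩) | ⟨⟨a, b⟩, ⟨ha, hb⟩, rfl⟩
    · exact Or.inr (Or.inl rfl)
    · exact Or.inr (Or.inr (Or.inl ⟨a, ha, rfl⟩))
    · exact Or.inr (Or.inr (Or.inr (Or.inl ⟨a, ha, b, hb, rfl⟩)))
    · exact Or.inr (Or.inr (Or.inr (Or.inr ⟨a, ha, b, hb, rfl⟩)))

lemma kappaRule_neg_empty {r₀ : Rule σ} {r : Rule (Atom σ)} (h : r ∈ kappaRule r₀) :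
    r.neg = ∅ := by
  rcases kappaRule_cases h with ⟨hn, rfl⟩ | rfl | ⟨a, _, rfl⟩ | ⟨a, _, b, _, rfl⟩ | ⟨a, _, b, _, rfl⟩
  · simp [mapRule, hn]
  all_goals rfl

lemma epi_neg_empty : ∀ r ∈ epi χ P, r.neg = ∅ := by
  intro r hr
  cases χ
  · exact kappaRule_neg_empty (mem_kappa.1 hr).choose_spec.2
  · simp only [epi, ht, Finset.mem_union, Finset.mem_image] at hr
    rcases hr with (hk | ⟨a, _, rfl⟩) | ⟨r₀, _, rfl⟩
    · exact kappaRule_neg_empty (mem_kappa.1 hk).choose_spec.2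
    all_goals rfl

lemma gap_not_mem_kappaRule_atoms {r₀ : Rule σ} {r : Rule (Atom σ)}
    (h : r ∈ kappaRule r₀) {a : σ} : Atom.gap a ∉ ruleAtoms r := by
  intro hx
  rcases kappaRule_cases h with ⟨hn, rfl⟩ | rfl | ⟨c, _, rfl⟩ | ⟨c, _, b, _, rfl⟩ | ⟨c, _, b, _, rfl⟩ <;>
    simp [ruleAtoms, mapRule] at hx

lemma gap_not_mem_epi {a : σ} : Atom.gap a ∉ progAtoms (epi χ P) := by
  intro hx
  obtain ⟨r, hr, hxr⟩ := Finset.mem_biUnion.1 hx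
  cases χ
  · obtain ⟨r₀, _, hk⟩ := mem_kappa.1 hr
    exact gap_not_mem_kappaRule_atoms hk hxr
  · simp only [epi, ht, Finset.mem_union, Finset.mem_image] at hr
    rcases hr with (hk | ⟨b, _, rfl⟩) | ⟨r₀, _, rfl⟩
    · obtain ⟨r₀, _, hkk⟩ := mem_kappa.1 hk
      exact gap_not_mem_kappaRule_atoms hkk hxr
    all_goals simp [ruleAtoms, mapRule] at hxr

lemma K_mem_Pi {a : σ} (h : Atom.K a ∈ progAtoms (Pi' χ P)) : a ∈ progAtoms P := by
  obtain ⟨r, hr, hxr⟩ := Finset.mem_biUnion.1 h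
  rw [Pi', Finset.mem_union] at hr
  rcases hr with hr | hr
  · have hkap : ∀ {r' : Rule (Atom σ)}, r' ∈ kappa P → Atom.K a ∈ ruleAtoms r' → a ∈ progAtoms P := by
      intro r' hr' hxr'
      obtain ⟨r₀, hr₀, hk⟩ := mem_kappa.1 hr'
      rcases kappaRule_cases hk with ⟨hn, rfl⟩ | rfl | ⟨c, _, rfl⟩ | ⟨c, _, b, _, rfl⟩ | ⟨c, _, b, _, rfl⟩ <;>
        simp [ruleAtoms, mapRule] at hxr'
      · exact mem_progAtoms_of hr₀ (mem_ruleAtoms.2 (Or.inr (Or.inr hxr')))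
    cases χ with
    | kappa => exact hkap hr hxr
    | ht =>
      simp only [epi, ht, Finset.mem_union, Finset.mem_image] at hr
      rcases hr with (hk | ⟨b, hb, rfl⟩) | ⟨r₀, hr₀, rfl⟩
      · exact hkap hk hxr
      · simp only [ruleAtoms, Finset.mem_union, Finset.mem_singleton] at hxr
        rcases hxr with (hx | hx) | hx <;> simp_all
      · simp only [ruleAtoms, Finset.mem_union, Finset.mem_image, Finset.notMem_empty,
          or_false, Atom.K.injEq, exists_eq_right] at hxr
        rcases hxr with (hb | hb) | hb
        · exact mem_progAtoms_of hr₀ (mem_ruleAtoms.2 (Or.inl hb))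
        · exact mem_progAtoms_of hr₀ (mem_ruleAtoms.2 (Or.inr (Or.inr hb)))
        · exact mem_progAtoms_of hr₀ (mem_ruleAtoms.2 (Or.inr (Or.inl hb)))
  · simp only [Pg, Finset.mem_image] at hr
    obtain ⟨b, hb, rfl⟩ := hr
    simp only [ruleAtoms, Finset.mem_union, Finset.mem_singleton] at hxr
    rcases hxr with (hx | hx) | hx <;> simp_all

lemma PSem_iff {I : Set (Atom σ)} :
    I ∈ PSem χ P ↔ ∃ S ∈ mc (AS (epi χ P)), I = S ∩ SigmaK σ := by
  cases χ <;> rfl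

/-- `sat` transfer for rules of `epi χ P` between interpretations agreeing on non-gap atoms. -/
lemma sat_epi_congr {r : Rule (Atom σ)} (hr : r ∈ epi χ P) {I J : Set (Atom σ)}
    (h : ∀ x : Atom σ, (∀ a : σ, x ≠ Atom.gap a) → (x ∈ I ↔ x ∈ J)) :
    r.sat I ↔ r.sat J :=
  sat_congr fun x hx => h x fun a hxa =>
    gap_not_mem_epi (χ := χ) (P := P) (a := a) (hxa ▸ mem_progAtoms_of hr hx)

/-- The set `A(S)` of atoms whose gap atom should be derived. -/
def Aset (Q : Finset (Rule σ)) (S : Set (Atom σ)) : Set σ :=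
  {a | a ∈ progAtoms Q ∧ Atom.K a ∈ S ∧ Atom.base a ∉ S}

/-- Remove all gap atoms from an interpretation. -/
def strip (M : Set (Atom σ)) : Set (Atom σ) :=
  {x | x ∈ M ∧ ∀ a : σ, x ≠ Atom.gap a}

lemma reduct_Pi {I : Set (Atom σ)} :
    reduct (Pi' χ P) I = epi χ P ∪ reduct (Pg P) I := by
  rw [Pi', reduct_union, reduct_negfree epi_neg_empty]

lemma mem_reduct_Pg {I : Set (Atom σ)} {r : Rule (Atom σ)} :
    r ∈ reduct (Pg P) I ↔
      ∃ a ∈ progAtoms P, Atom.base a ∉ I ∧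
        r = ⟨{Atom.gap a}, {Atom.K a}, ∅⟩ := by
  rw [mem_reduct]
  constructor
  · rintro ⟨r₀, hr₀, hn, rfl⟩
    simp only [Pg, Finset.mem_image] at hr₀
    obtain ⟨a, ha, rfl⟩ := hr₀
    exact ⟨a, ha, by simpa using hn, rfl⟩
  · rintro ⟨a, ha, hb, rfl⟩
    exact ⟨⟨{Atom.gap a}, {Atom.K a}, {Atom.base a}⟩,
      by simp only [Pg, Finset.mem_image]; exact ⟨a, ha, rfl⟩, by simpa, rfl⟩

lemma gap_mem_AS {M : Set (Atom σ)} (hM : M ∈ AS (Pi' χ P)) {a : σ} :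
    Atom.gap a ∈ M ↔ a ∈ Aset P M := by
  obtain ⟨hmod, hmin⟩ := hM
  rw [reduct_Pi] at hmod
  have hmod' := isModel_union.1 hmod
  constructor
  · intro hg
    by_contra hA
    apply hmin (M \ {Atom.gap a}) (Set.sdiff_singleton_ssubset.2 hg)
    rw [reduct_Pi, isModel_union]
    constructor
    · intro r hr
      refine (sat_epi_congr hr ?_).1 (hmod'.1 r hr)
      intro x hx
      exact ⟨fun h => ⟨h, fun he => hx a (by simpa using he)⟩, fun h => h.1⟩
    · intro r hr
      obtain ⟨b, hb, hbM, rfl⟩ := mem_reduct_Pg.1 hr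
      rintro ⟨hp, -⟩
      have hKb : Atom.K b ∈ M := (hp (by simp)).1
      have hgb : Atom.gap b ∈ M := by
        simpa using hmod'.2 _ hr ⟨by simpa using hKb, by simp⟩
      by_cases hba : b = a
      · subst hba
        exact absurd ⟨hb, hKb, hbM⟩ hA
      · exact ⟨Atom.gap b, by simp,
          ⟨hgb, fun he => hba (by injection (Set.mem_singleton_iff.1 he))⟩⟩
  · rintro ⟨ha, hK, hb⟩
    have hr : (⟨{Atom.gap a}, {Atom.K a}, ∅⟩ : Rule (Atom σ)) ∈ reduct (Pg P) M :=
      mem_reduct_Pg.2 ⟨a, ha, hb, rfl⟩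
    simpa using hmod'.2 _ hr ⟨by simpa using hK, by simp⟩

lemma strip_AS {M : Set (Atom σ)} (hM : M ∈ AS (Pi' χ P)) :
    strip M ∈ AS (epi χ P) := by
  obtain ⟨hmod, hmin⟩ := hM
  rw [reduct_Pi] at hmod
  have hmod' := isModel_union.1 hmod
  constructor
  · rw [reduct_negfree epi_neg_empty]
    intro r hr
    refine (sat_epi_congr hr ?_).1 (hmod'.1 r hr)
    intro x hx
    exact ⟨fun h => ⟨h, hx⟩, fun h => h.1⟩
  · intro J hJ hJm
    rw [reduct_negfree epi_neg_empty] at hJm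
    set J' : Set (Atom σ) := J ∪ {x ∈ M | ∃ a : σ, x = Atom.gap a} with hJ'def
    have hJ'M : J' ⊆ M := by
      rintro x (hx | hx)
      · exact (hJ.subset hx).1
      · exact hx.1
    refine hmin J' (Set.ssubset_iff_subset_ne.2 ⟨hJ'M, fun heq => ?_⟩) ?_
    · obtain ⟨x, hxS, hxJ⟩ := Set.exists_of_ssubset hJ
      have : x ∈ J' := heq ▸ hxS.1
      rcases this with hx | hx
      · exact hxJ hx
      · obtain ⟨a, rfl⟩ := hx.2
        exact hxS.2 a rfl
    · rw [reduct_Pi, isModel_union]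
      constructor
      · intro r hr
        refine (sat_epi_congr hr ?_).1 (hJm r hr)
        intro x hx
        constructor
        · exact Or.inl
        · rintro (h | h)
          · exact h
          · obtain ⟨a, rfl⟩ := h.2
            exact absurd rfl (hx a)
      · intro r hr
        obtain ⟨b, hb, hbM, rfl⟩ := mem_reduct_Pg.1 hr
        rintro ⟨hp, -⟩
        have hKbJ : Atom.K b ∈ J' := hp (by simp)
        have hKbM : Atom.K b ∈ M := hJ'M hKbJ
        have hgb : Atom.gap b ∈ M := by
          simpa using hmod'.2 _ hr ⟨by simpa using hKbM, by simp⟩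
        exact ⟨Atom.gap b, by simp, Or.inr ⟨hgb, b, rfl⟩⟩

lemma AS_epi_gapfree {S : Set (Atom σ)} (hS : S ∈ AS (epi χ P)) (a : σ) :
    Atom.gap a ∉ S :=
  fun h => gap_not_mem_epi (AS_subset_progAtoms hS h)

lemma claimB {S : Set (Atom σ)} (hS : S ∈ AS (epi χ P)) :
    S ∪ Atom.gap '' Aset P S ∈ AS (Pi' χ P) := by
  have hgf := AS_epi_gapfree hS
  set N : Set (Atom σ) := S ∪ Atom.gap '' Aset P S with hNdef
  have hng : ∀ x : Atom σ, (∀ a : σ, x ≠ Atom.gap a) → (x ∈ N ↔ x ∈ S) := by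
    intro x hx
    constructor
    · rintro (h | ⟨a, -, rfl⟩)
      · exact h
      · exact absurd rfl (hx _)
    · exact Or.inl
  have hbaseN : ∀ a : σ, (Atom.base a ∈ N ↔ Atom.base a ∈ S) := fun a => hng _ (by simp)
  have hKN : ∀ a : σ, (Atom.K a ∈ N ↔ Atom.K a ∈ S) := fun a => hng _ (by simp)
  obtain ⟨hmod, hmin⟩ := hS
  rw [reduct_negfree epi_neg_empty] at hmod
  constructor
  · rw [reduct_Pi, isModel_union]
    constructor
    · intro r hr
      exact (sat_epi_congr hr fun x hx => (hng x hx).symm).1 (hmod r hr)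
    · intro r hr
      obtain ⟨b, hb, hbN, rfl⟩ := mem_reduct_Pg.1 hr
      rintro ⟨hp, -⟩
      have hKb : Atom.K b ∈ S := (hKN b).1 (hp (by simp))
      have hbS : Atom.base b ∉ S := fun h => hbN ((hbaseN b).2 h)
      exact ⟨Atom.gap b, by simp, Or.inr ⟨b, ⟨hb, hKb, hbS⟩, rfl⟩⟩
  · intro J hJ hJm
    rw [reduct_Pi, isModel_union] at hJm
    set J₀ : Set (Atom σ) := {x ∈ J | ∀ a : σ, x ≠ Atom.gap a} with hJ₀def
    have hJ₀m : isModel J₀ (epi χ P) := by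
      intro r hr
      refine (sat_epi_congr hr ?_).1 (hJm.1 r hr)
      intro x hx
      exact ⟨fun h => ⟨h, hx⟩, fun h => h.1⟩
    have hJ₀S : J₀ ⊆ S := fun x hx => (hng x hx.2).1 (hJ.subset hx.1)
    have hJ₀eq : J₀ = S := by
      by_contra hne
      exact hmin J₀ (Set.ssubset_iff_subset_ne.2 ⟨hJ₀S, hne⟩)
        (by rwa [reduct_negfree epi_neg_empty])
    have hSJ : S ⊆ J := fun x hx => (hJ₀eq ▸ hx : x ∈ J₀).1
    have hGJ : Atom.gap '' Aset P S ⊆ J := by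
      rintro x ⟨b, ⟨hb, hKb, hbS⟩, rfl⟩
      have hbN : Atom.base b ∉ N := fun h => hbS ((hbaseN b).1 h)
      have hrule : (⟨{Atom.gap b}, {Atom.K b}, ∅⟩ : Rule (Atom σ)) ∈ reduct (Pg P) N :=
        mem_reduct_Pg.2 ⟨b, hb, hbN, rfl⟩
      simpa using hJm.2 _ hrule ⟨by simpa using hSJ hKb, by simp⟩
    exact hJ.not_subset (Set.union_subset hSJ hGJ)

lemma gapG_eq {S : Set (Atom σ)} (h : ∀ a : σ, Atom.K a ∈ S → a ∈ progAtoms P) :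
    gapG S = Atom.K '' Aset P S := by
  ext x
  simp only [gapG, Set.mem_setOf_eq, Set.mem_image, Aset, Set.mem_setOf_eq]
  constructor
  · rintro ⟨a, rfl, hK, hb⟩
    exact ⟨a, ⟨h a hK, hK, hb⟩, rfl⟩
  · rintro ⟨a, ⟨-, hK, hb⟩, rfl⟩
    exact ⟨a, rfl, hK, hb⟩

lemma gapG_inter_SigmaK {S : Set (Atom σ)} : gapG (S ∩ SigmaK σ) = gapG S := by
  ext x
  simp only [gapG, Set.mem_setOf_eq, Set.mem_inter_iff, SigmaK, Set.mem_union,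
    Set.mem_range]
  constructor
  · rintro ⟨a, rfl, ⟨hK, -⟩, hb⟩
    exact ⟨a, rfl, hK, fun h => hb ⟨h, Or.inl ⟨a, rfl⟩⟩⟩
  · rintro ⟨a, rfl, hK, hb⟩
    exact ⟨a, rfl, ⟨hK, Or.inr ⟨a, rfl⟩⟩, fun h => hb h.1⟩

lemma Aset_strip {M : Set (Atom σ)} : Aset P (strip M) = Aset P M := by
  ext a
  simp only [Aset, strip, Set.mem_setOf_eq]
  constructor
  · rintro ⟨hp, ⟨hK, -⟩, hb⟩
    exact ⟨hp, hK, fun h => hb ⟨h, by simp⟩⟩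
  · rintro ⟨hp, hK, hb⟩
    exact ⟨hp, ⟨hK, by simp⟩, fun h => hb h.1⟩

lemma mem_gapFin {M : Set (Atom σ)} {x : Atom σ} :
    x ∈ gapFin P M ↔ ∃ a ∈ progAtoms P, Atom.gap a ∈ M ∧ x = Atom.gap a := by
  classical
  simp only [gapFin, Finset.mem_filter, Finset.mem_image]
  constructor
  · rintro ⟨⟨a, ha, rfl⟩, hMx⟩
    exact ⟨a, ha, hMx, rfl⟩
  · rintro ⟨a, ha, hMx, rfl⟩
    exact ⟨⟨a, ha, rfl⟩, hMx⟩

lemma PiM_head_empty {M : Set (Atom σ)} : ∀ c ∈ PiM P M, c.head = ∅ := by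
  intro c hc
  simp only [PiM, Finset.mem_union, Finset.mem_singleton, Finset.mem_image] at hc
  rcases hc with rfl | ⟨a, -, rfl⟩ <;> rfl

lemma sat_PiM_iff {M N : Set (Atom σ)} :
    (∀ c ∈ PiM P M, c.sat N) ↔
      (¬ (↑(gapFin P M) : Set (Atom σ)) ⊆ N) ∧
        ∀ a ∈ progAtoms P, Atom.gap a ∉ M → Atom.gap a ∉ N := by
  constructor
  · intro h
    constructor
    · have h1 := h ⟨∅, gapFin P M, ∅⟩ (by simp [PiM])
      rw [sat_constraint_iff rfl] at h1
      exact fun hsub => h1 ⟨hsub, by simp⟩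
    · intro a ha hgM hgN
      have hc : (⟨∅, {Atom.gap a}, ∅⟩ : Rule (Atom σ)) ∈ PiM P M := by
        simp only [PiM, Finset.mem_union, Finset.mem_image, Finset.mem_filter]
        exact Or.inr ⟨a, ⟨ha, hgM⟩, rfl⟩
      have h2 := h _ hc
      rw [sat_constraint_iff rfl] at h2
      exact h2 ⟨by simpa using hgN, by simp⟩
  · rintro ⟨h1, h2⟩ c hc
    simp only [PiM, Finset.mem_union, Finset.mem_singleton, Finset.mem_image,
      Finset.mem_filter] at hc
    rcases hc with rfl | ⟨a, ⟨ha, hgM⟩, rfl⟩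
    · rw [sat_constraint_iff rfl]
      exact fun hh => h1 hh.1
    · rw [sat_constraint_iff rfl]
      rintro ⟨hsub, -⟩
      exact h2 a ha hgM (by simpa using hsub (by simp))

end SigmaAux

end ASP

open ASP in
/-- For an answer set `M` of `Π = P^χ ∪ P_g`,
`AS(Π ∪ Π_M) ≠ ∅` iff `M` is not a paracoherent answer set of `P`. -/
theorem stmt1 {σ : Type} [DecidableEq σ] [Countable σ] [Infinite σ]
    (P : Finset (Rule σ)) (χ : Chi) (M : Set (Atom σ))
    (hM : M ∈ AS (Pi' χ P)) :
    AS (Pi' χ P ∪ PiM P M) ≠ ∅ ↔ ¬ paracoherent χ P M := by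
  have hKinj : Function.Injective (Atom.K : σ → Atom σ) := fun a b h => by injection h
  have himg : ∀ {A B : Set σ}, (Atom.K '' A ⊂ Atom.K '' B ↔ A ⊂ B) := by
    intro A B
    rw [Set.ssubset_def, Set.ssubset_def, Set.image_subset_image_iff hKinj,
      Set.image_subset_image_iff hKinj]
  rw [← Set.nonempty_iff_ne_empty]
  constructor
  · rintro ⟨N, hN⟩ hpara
    rw [AS_union_constraints PiM_head_empty] at hN
    obtain ⟨hNAS, hNsat⟩ := hN
    rw [sat_PiM_iff] at hNsat
    obtain ⟨h1, h2⟩ := hNsat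
    obtain ⟨-, hsem⟩ := hpara
    obtain ⟨S'', hS''mc, hMeq⟩ := PSem_iff.1 hsem
    have hsub : Aset P N ⊆ Aset P M := by
      intro a ha
      have hgN : Atom.gap a ∈ N := (gap_mem_AS hNAS).2 ha
      have hgM : Atom.gap a ∈ M := by
        by_contra hgM
        exact h2 a ha.1 hgM hgN
      exact (gap_mem_AS hM).1 hgM
    have hne : ¬ Aset P M ⊆ Aset P N := by
      intro hs
      apply h1
      intro x hx
      obtain ⟨a, ha, hgM, rfl⟩ := mem_gapFin.1 (Finset.mem_coe.1 hx)
      exact (gap_mem_AS hNAS).2 (hs ((gap_mem_AS hM).1 hgM))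
    have hKM : ∀ a : σ, Atom.K a ∈ M → a ∈ progAtoms P := fun a h =>
      K_mem_Pi (AS_subset_progAtoms hM h)
    have hKSN : ∀ a : σ, Atom.K a ∈ strip N → a ∈ progAtoms P := fun a h =>
      K_mem_Pi (AS_subset_progAtoms hNAS h.1)
    apply hS''mc.2
    refine ⟨strip N, strip_AS hNAS, ?_⟩
    have e1 : gapG (strip N) = Atom.K '' Aset P N := by
      rw [gapG_eq hKSN, Aset_strip]
    have e2 : gapG S'' = Atom.K '' Aset P M := by
      rw [← gapG_inter_SigmaK (S := S''), ← hMeq, gapG_inter_SigmaK, gapG_eq hKM]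
    rw [e1, e2]
    exact himg.2 ⟨hsub, hne⟩
  · intro hnp
    have hsem : M ∩ SigmaK σ ∉ PSem χ P := fun h => hnp ⟨hM, h⟩
    have hS : strip M ∈ AS (epi χ P) := strip_AS hM
    have hSK : strip M ∩ SigmaK σ = M ∩ SigmaK σ := by
      ext x
      constructor
      · rintro ⟨hx, hs⟩
        exact ⟨hx.1, hs⟩
      · rintro ⟨hx, hs⟩
        refine ⟨⟨hx, ?_⟩, hs⟩
        rcases hs with ⟨a, rfl⟩ | ⟨a, rfl⟩ <;> simp
    have hnotmc : strip M ∉ mc (AS (epi χ P)) := fun h =>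
      hsem (PSem_iff.2 ⟨strip M, h, hSK.symm⟩)
    have hex : ∃ J ∈ AS (epi χ P), gapG J ⊂ gapG (strip M) := by
      by_contra hno
      exact hnotmc ⟨hS, hno⟩
    obtain ⟨S', hS', hlt⟩ := hex
    set N : Set (Atom σ) := S' ∪ Atom.gap '' Aset P S' with hNdef
    have hNAS : N ∈ AS (Pi' χ P) := claimB hS'
    have hKS' : ∀ a : σ, Atom.K a ∈ S' → a ∈ progAtoms P := fun a h =>
      K_mem_Pi (progAtoms_mono Finset.subset_union_left (AS_subset_progAtoms hS' h))
    have hKSM : ∀ a : σ, Atom.K a ∈ strip M → a ∈ progAtoms P := fun a h =>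
      K_mem_Pi (AS_subset_progAtoms hM h.1)
    have hAsub : Aset P S' ⊂ Aset P M := by
      have h' : Aset P S' ⊂ Aset P (strip M) := by
        apply himg.1
        rw [← gapG_eq hKS', ← gapG_eq hKSM]
        exact hlt
      rwa [Aset_strip] at h'
    have hgapN : ∀ a : σ, Atom.gap a ∈ N ↔ a ∈ Aset P S' := by
      intro a
      constructor
      · rintro (h | ⟨b, hb, heq⟩)
        · exact absurd h (AS_epi_gapfree hS' a)
        · obtain rfl : b = a := by injection heq
          exact hb
      · intro h
        exact Or.inr ⟨a, h, rfl⟩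
    refine ⟨N, ?_⟩
    rw [AS_union_constraints PiM_head_empty]
    refine ⟨hNAS, sat_PiM_iff.2 ⟨?_, ?_⟩⟩
    · obtain ⟨a, haM, haS'⟩ := Set.exists_of_ssubset hAsub
      intro hsubN
      exact haS' ((hgapN a).1
        (hsubN (Finset.mem_coe.2 (mem_gapFin.2 ⟨a, haM.1, (gap_mem_AS hM).2 haM, rfl⟩))))
    · intro a ha hgM hgN
      exact hgM ((gap_mem_AS hM).2 (hAsub.subset ((hgapN a).1 hgN)))
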